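/- Let p, q, k be positive integers with q ≥ k·p and k ≥ p+2, and define N(k) = (q-p)·(q/(k·p) + 1)^(k-p-1) (a real number). Then p + N(k)/(q/(k·p) + 1) ≤ N(k-1), where N(k-1) = (q-p)·(q/((k-1)·p)+1)^{k-p-2} for k > p+2 and N(p+1) = q. -/

import Mathlib

noncomputable def Nmon (p q : ℕ) (j : ℕ) : ℝ :=
  if j = p + 1 then (q : ℝ)
  else ((q : ℝ) - (p : ℝ)) * ((q : ℝ) / ((j : ℝ) * (p : ℝ)) + 1) ^ (j - p - 1)

lemma pow_sub_pow_ge (A B : ℝ) (hB : 1 ≤ B) (hAB : B ≤ A) (m : ℕ) :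
    A - B ≤ A ^ (m + 1) - B ^ (m + 1) := by
  induction m with
  | zero => simp
  | succ n ih =>
    have h1 : (1:ℝ) ≤ B ^ (n + 1) := one_le_pow₀ hB
    have h2 : B ^ (n + 1) ≤ A ^ (n + 1) := pow_le_pow_left₀ (by linarith) hAB _
    have e1 : A ^ (n + 2) = A * A ^ (n + 1) := by ring
    have e2 : B ^ (n + 2) = B * B ^ (n + 1) := by ring
    nlinarith

theorem stmt_8 (p q k : ℕ) (hp : 0 < p) (hq : 0 < q) (hk : 0 < k)
    (hqkp : k * p ≤ q) (hkp : p + 2 ≤ k) :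
    (p : ℝ) + Nmon p q k / ((q : ℝ) / ((k : ℝ) * (p : ℝ)) + 1) ≤ Nmon p q (k - 1) := by
  have hp1 : (1:ℝ) ≤ (p:ℝ) := by exact_mod_cast hp
  have hk3 : (3:ℝ) ≤ (k:ℝ) := by
    have : 3 ≤ k := by omega
    exact_mod_cast this
  have hqr : (k:ℝ) * (p:ℝ) ≤ (q:ℝ) := by exact_mod_cast hqkp
  have hkpos : (0:ℝ) < (k:ℝ) * (p:ℝ) := by nlinarith
  have hB0 : (0:ℝ) ≤ (q:ℝ) / ((k:ℝ) * (p:ℝ)) := by positivity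
  have hB1 : (1:ℝ) ≤ (q:ℝ) / ((k:ℝ) * (p:ℝ)) + 1 := by linarith
  have hBpos : (0:ℝ) < (q:ℝ) / ((k:ℝ) * (p:ℝ)) + 1 := by linarith
  rcases eq_or_lt_of_le hkp with he | hlt
  · -- k = p + 2
    have hk2 : k = p + 2 := he.symm
    subst hk2
    have h1 : p + 2 ≠ p + 1 := by omega
    have h2 : p + 2 - 1 = p + 1 := by omega
    have h3 : p + 2 - p - 1 = 1 := by omega
    simp only [Nmon, if_neg h1, h2, h3, pow_one, ite_true, if_pos rfl]
    rw [mul_div_assoc, div_self (ne_of_gt hBpos)]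
    linarith
  · -- k > p + 2
    obtain ⟨m, hm⟩ : ∃ m, k - p - 1 = m + 2 := ⟨k - p - 3, by omega⟩
    have hk1 : k - 1 ≠ p + 1 := by omega
    have hk2' : k ≠ p + 1 := by omega
    have hm1 : k - 1 - p - 1 = m + 1 := by omega
    have hcast : ((k - 1 : ℕ) : ℝ) = (k:ℝ) - 1 := by
      have h1k : 1 ≤ k := hk
      push_cast [h1k]; ring
    simp only [Nmon, if_neg hk1, if_neg hk2', hm1, hm, hcast]
    set B : ℝ := (q:ℝ) / ((k:ℝ) * (p:ℝ)) + 1 with hBdef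
    set A : ℝ := (q:ℝ) / (((k:ℝ) - 1) * (p:ℝ)) + 1 with hAdef
    have hden1' : (0:ℝ) < ((k:ℝ) - 1) * (p:ℝ) := by nlinarith
    have hden1 : ((k:ℝ) - 1) * (p:ℝ) ≠ 0 := ne_of_gt hden1'
    have hAB : B ≤ A := by
      have : (q:ℝ) / ((k:ℝ) * (p:ℝ)) ≤ (q:ℝ) / (((k:ℝ) - 1) * (p:ℝ)) := by
        apply div_le_div_of_nonneg_left (by positivity) hden1'
        nlinarith
      simp only [hAdef, hBdef]; linarith
    have hqp0 : (0:ℝ) ≤ (q:ℝ) - (p:ℝ) := by nlinarith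
    have key : A - B ≤ A ^ (m + 1) - B ^ (m + 1) := pow_sub_pow_ge A B hB1 hAB m
    have key2 : (p:ℝ) ≤ ((q:ℝ) - (p:ℝ)) * (A - B) := by
      have hABval : A - B = (q:ℝ) * (p:ℝ) / ((((k:ℝ) - 1) * (p:ℝ)) * ((k:ℝ) * (p:ℝ))) := by
        rw [hAdef, hBdef, eq_div_iff (by positivity)]
        field_simp [show (k:ℝ) - 1 ≠ 0 by linarith]
        ring
      rw [hABval, ← mul_div_assoc, le_div_iff₀ (by positivity)]
      have h6 : (((k:ℝ) - 1) * (p:ℝ)) * ((k:ℝ) * (p:ℝ)) ≤ ((q:ℝ) - (p:ℝ)) * (q:ℝ) :=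
        mul_le_mul (by nlinarith) hqr (le_of_lt hkpos) hqp0
      calc (p:ℝ) * ((((k:ℝ) - 1) * (p:ℝ)) * ((k:ℝ) * (p:ℝ)))
          ≤ (p:ℝ) * (((q:ℝ) - (p:ℝ)) * (q:ℝ)) :=
            mul_le_mul_of_nonneg_left h6 (by positivity)
        _ = ((q:ℝ) - (p:ℝ)) * ((q:ℝ) * (p:ℝ)) := by ring
    have hdiv : ((q:ℝ) - (p:ℝ)) * B ^ (m + 2) / B = ((q:ℝ) - (p:ℝ)) * B ^ (m + 1) := by
      rw [pow_succ, ← mul_assoc, mul_div_assoc, div_self (ne_of_gt hBpos), mul_one]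
    rw [hdiv]
    have h7 := mul_le_mul_of_nonneg_left key hqp0
    rw [mul_sub, mul_sub] at h7
    linarith
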